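/- arXiv:2412.03696 — 6 statements merged into one kernel-verified Lean document; each statement's English description precedes it below -/
import Mathlib

section
/- Let N ≥ 1, let λ₁, …, λ_N be pairwise distinct real numbers, let n ∈ ℕ, and let z ∈ ℂ be non-real. Then the sum over all tuples (e₀, e₁, …, e_n) of pairwise distinct indices in {1, …, N} of the quantity (z − λ_{e₀})⁻² · [ ∏_{k=1}^{n} (λ_{e₀} − λ_{e_k})⁻¹ − ∏_{k=1}^{n} (z − λ_{e_k})⁻¹ ] equals zero. -/
open Finset

private lemma sub_real_ne_zero {z : ℂ} (hz : z.im ≠ 0) (r : ℝ) : z - (r : ℂ) ≠ 0 := by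
  intro h
  apply hz
  have := congrArg Complex.im h
  simpa using this

/-- Partial fraction decomposition of `1/∏ (w - ν i)` at distinct real nodes. -/
private lemma partial_fractions {m : ℕ} (ν : Fin (m + 1) → ℝ) (hν : Function.Injective ν)
    {w : ℂ} (hw : ∀ i, w - (ν i : ℂ) ≠ 0) :
    ∑ j, (∏ i ∈ univ.erase j, ((ν j : ℂ) - (ν i : ℂ))⁻¹) * (w - (ν j : ℂ))⁻¹
      = (∏ i, (w - (ν i : ℂ)))⁻¹ := by
  classical
  have hinj : Set.InjOn (fun i : Fin (m + 1) => ((ν i : ℂ))) (univ : Finset (Fin (m+1))) := by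
    intro a _ b _ h
    exact hν (Complex.ofReal_injective h)
  have hL := Lagrange.sum_basis (v := fun i : Fin (m+1) => ((ν i : ℂ)))
    (s := univ) hinj ⟨0, mem_univ 0⟩
  have hev := congrArg (Polynomial.eval w) hL
  rw [Polynomial.eval_finset_sum, Polynomial.eval_one] at hev
  have hbasis : ∀ j, Polynomial.eval w (Lagrange.basis univ (fun i : Fin (m+1) => ((ν i : ℂ))) j)
      = ∏ i ∈ univ.erase j, (((ν j : ℂ) - (ν i : ℂ))⁻¹ * (w - (ν i : ℂ))) := by
    intro j
    rw [Lagrange.basis, Polynomial.eval_prod]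
    refine prod_congr rfl fun i _ => ?_
    simp [Lagrange.basisDivisor]
  have hkey : (∑ j, (∏ i ∈ univ.erase j, ((ν j : ℂ) - (ν i : ℂ))⁻¹) * (w - (ν j : ℂ))⁻¹)
      * (∏ i, (w - (ν i : ℂ))) = 1 := by
    rw [sum_mul, ← hev]
    refine sum_congr rfl fun j _ => ?_
    rw [hbasis j, prod_mul_distrib, mul_assoc]
    congr 1
    rw [← mul_prod_erase univ _ (mem_univ j), inv_mul_cancel_left₀ (hw j)]
  exact eq_inv_of_mul_eq_one_left hkey

/-- Key identity: sum over the base point of a set of distinct nodes. -/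
private lemma key_identity {m : ℕ} (ν : Fin (m + 1) → ℝ) (hν : Function.Injective ν)
    (z : ℂ) (hz : z.im ≠ 0) :
    ∑ j, ((z - (ν j : ℂ))⁻¹) ^ 2 *
      ((∏ i ∈ univ.erase j, ((ν j : ℂ) - (ν i : ℂ))⁻¹)
        - ∏ i ∈ univ.erase j, (z - (ν i : ℂ))⁻¹) = 0 := by
  classical
  have hzw : ∀ w : ℂ, w.im ≠ 0 → ∀ i, w - (ν i : ℂ) ≠ 0 := fun w h i => sub_real_ne_zero h _
  set c : Fin (m + 1) → ℂ := fun j => ∏ i ∈ univ.erase j, ((ν j : ℂ) - (ν i : ℂ))⁻¹ with hc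
  set g : ℂ → ℂ := fun w => ∑ j, c j * (w - (ν j : ℂ))⁻¹ with hg
  set f : ℂ → ℂ := fun w => (∏ i, (w - (ν i : ℂ)))⁻¹ with hf
  have hU : IsOpen {w : ℂ | w.im ≠ 0} :=
    isOpen_ne.preimage Complex.continuous_im
  have hmem : {w : ℂ | w.im ≠ 0} ∈ nhds z := hU.mem_nhds hz
  have heq : g =ᶠ[nhds z] f :=
    Filter.eventuallyEq_of_mem hmem fun w hw => partial_fractions ν hν (hzw w hw)
  have hgd : HasDerivAt g (∑ j, c j * (-(1 : ℂ) / (z - (ν j : ℂ)) ^ 2)) z := by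
    apply HasDerivAt.fun_sum
    intro j _
    exact (((hasDerivAt_id z).sub_const _).inv (hzw z hz j)).const_mul (c j)
  have hPd : HasDerivAt (fun w : ℂ => ∏ i, (w - (ν i : ℂ)))
      (∑ j, (∏ i ∈ univ.erase j, (z - (ν i : ℂ))) • (1 : ℂ)) z := by
    apply HasDerivAt.fun_finsetProd
    intro i _
    exact (hasDerivAt_id z).sub_const _
  have hP : (∏ i, (z - (ν i : ℂ))) ≠ 0 := prod_ne_zero_iff.mpr fun i _ => hzw z hz i
  have hfd : HasDerivAt f
      (-(∑ j, (∏ i ∈ univ.erase j, (z - (ν i : ℂ))) • (1 : ℂ))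
        / (∏ i, (z - (ν i : ℂ))) ^ 2) z := hPd.inv hP
  have hde : deriv g z = deriv f z := heq.deriv_eq
  rw [hgd.deriv, hfd.deriv] at hde
  simp only [smul_eq_mul, mul_one] at hde
  have e1 : ∀ j, c j * (-(1 : ℂ) / (z - (ν j : ℂ)) ^ 2)
      = -(((z - (ν j : ℂ))⁻¹) ^ 2 * c j) := by
    intro j
    rw [inv_pow]
    ring
  have e2 : ∀ j : Fin (m + 1),
      (∏ i ∈ univ.erase j, (z - (ν i : ℂ))) / (∏ i, (z - (ν i : ℂ))) ^ 2
        = ((z - (ν j : ℂ))⁻¹) ^ 2 * ∏ i ∈ univ.erase j, (z - (ν i : ℂ))⁻¹ := by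
    intro j
    have hQ : (∏ i ∈ univ.erase j, (z - (ν i : ℂ))) ≠ 0 :=
      prod_ne_zero_iff.mpr fun i _ => hzw z hz i
    rw [prod_inv_distrib, ← mul_prod_erase univ _ (mem_univ j), mul_pow]
    field_simp [hzw z hz j, hQ]
  have h1 : ∑ j, ((z - (ν j : ℂ))⁻¹) ^ 2 * c j
      = ∑ j, ((z - (ν j : ℂ))⁻¹) ^ 2 * ∏ i ∈ univ.erase j, (z - (ν i : ℂ))⁻¹ := by
    have h2 : -(∑ j, ((z - (ν j : ℂ))⁻¹) ^ 2 * c j)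
        = -(∑ j, ((z - (ν j : ℂ))⁻¹) ^ 2 * ∏ i ∈ univ.erase j, (z - (ν i : ℂ))⁻¹) := by
      calc -(∑ j, ((z - (ν j : ℂ))⁻¹) ^ 2 * c j)
          = ∑ j, c j * (-(1 : ℂ) / (z - (ν j : ℂ)) ^ 2) := by
            rw [← Finset.sum_neg_distrib]
            exact (sum_congr rfl fun j _ => (e1 j)).symm
        _ = -(∑ j, (∏ i ∈ univ.erase j, (z - (ν i : ℂ))))
              / (∏ i, (z - (ν i : ℂ))) ^ 2 := hde
        _ = -(∑ j, ((z - (ν j : ℂ))⁻¹) ^ 2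
              * ∏ i ∈ univ.erase j, (z - (ν i : ℂ))⁻¹) := by
            rw [neg_div, sum_div]
            congr 1
            exact sum_congr rfl fun j _ => e2 j
    exact neg_injective h2
  simp only [mul_sub]
  rw [sum_sub_distrib, h1, sub_self]

/-- Reindexing a product over `Fin n` through `swap 0 j ∘ succ`. -/
private lemma prod_swap_succ {n : ℕ} (j : Fin (n + 1)) (f : Fin (n + 1) → ℂ) :
    ∏ k : Fin n, f (Equiv.swap 0 j k.succ)
      = ∏ i ∈ (univ : Finset (Fin (n + 1))).erase j, f i := by
  classical
  refine prod_bij' (fun k _ => Equiv.swap 0 j k.succ)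
    (fun i hi => (Equiv.swap 0 j i).pred ?_) ?_ ?_ ?_ ?_ ?_
  · intro h0
    apply (mem_erase.mp hi).1
    have := (Equiv.swap 0 j).injective (h0.trans (Equiv.swap_apply_right 0 j).symm)
    exact this
  · intro k _
    rw [mem_erase]
    refine ⟨?_, mem_univ _⟩
    intro hj
    have := (Equiv.swap 0 j).injective (hj.trans (Equiv.swap_apply_left 0 j).symm)
    exact Fin.succ_ne_zero k this
  · intro i _
    exact mem_univ _
  · intro k hk
    simp [Equiv.swap_apply_self, Fin.pred_succ]
  · intro i hi
    simp [Fin.succ_pred, Equiv.swap_apply_self]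
  · intro k _
    rfl

/-- Lemma 1 of the paper: for pairwise distinct reals `λ₁, …, λ_N` and non-real `z`,
the sum over all ordered `(n+1)`-tuples `(e₀, …, e_n)` of pairwise distinct indices of
`(z − λ_{e₀})⁻² [∏_{k=1}^n (λ_{e₀} − λ_{e_k})⁻¹ − ∏_{k=1}^n (z − λ_{e_k})⁻¹]` vanishes. -/
theorem sum_residues_vanishes
    (N : ℕ) (hN : 1 ≤ N) (lam : Fin N → ℝ) (hlam : Function.Injective lam)
    (n : ℕ) (z : ℂ) (hz : z.im ≠ 0) :
    ∑ e : Fin (n + 1) ↪ Fin N,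
      ((z - (lam (e 0) : ℂ))⁻¹) ^ 2 *
        ((∏ k : Fin n, ((lam (e 0) : ℂ) - (lam (e k.succ) : ℂ))⁻¹) -
          ∏ k : Fin n, (z - (lam (e k.succ) : ℂ))⁻¹) = 0 := by
  classical
  set F : (Fin (n + 1) ↪ Fin N) → ℂ := fun e =>
    ((z - (lam (e 0) : ℂ))⁻¹) ^ 2 *
      ((∏ k : Fin n, ((lam (e 0) : ℂ) - (lam (e k.succ) : ℂ))⁻¹) -
        ∏ k : Fin n, (z - (lam (e k.succ) : ℂ))⁻¹) with hF
  show ∑ e, F e = 0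
  have hswap : ∀ π : Equiv.Perm (Fin (n + 1)),
      ∑ e : Fin (n + 1) ↪ Fin N, F (π.toEmbedding.trans e) = ∑ e, F e := by
    intro π
    refine Fintype.sum_bijective (fun e => π.toEmbedding.trans e) ?_ _ _ (fun e => rfl)
    exact (Equiv.mk (fun e => π.toEmbedding.trans e) (fun e => π.symm.toEmbedding.trans e)
      (fun e => by ext k; simp) (fun e => by ext k; simp)).bijective
  have hpt : ∀ e : Fin (n + 1) ↪ Fin N,
      ∑ j : Fin (n + 1), F ((Equiv.swap 0 j).toEmbedding.trans e) = 0 := by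
    intro e
    have hinj : Function.Injective (fun i : Fin (n + 1) => lam (e i)) :=
      hlam.comp e.injective
    have hkey := key_identity (fun i : Fin (n + 1) => lam (e i)) hinj z hz
    rw [← hkey]
    refine sum_congr rfl fun j _ => ?_
    simp only [hF, Function.Embedding.trans_apply, Equiv.coe_toEmbedding,
      Equiv.swap_apply_left]
    rw [prod_swap_succ j (fun i => ((lam (e j) : ℂ) - (lam (e i) : ℂ))⁻¹),
      prod_swap_succ j (fun i => (z - (lam (e i) : ℂ))⁻¹)]
  have htot : ((n : ℂ) + 1) * ∑ e, F e = 0 := by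
    calc ((n : ℂ) + 1) * ∑ e, F e
        = ∑ _j : Fin (n + 1), ∑ e, F e := by
          rw [sum_const, card_univ, Fintype.card_fin, nsmul_eq_mul]
          push_cast
          ring
      _ = ∑ j : Fin (n + 1), ∑ e, F ((Equiv.swap 0 j).toEmbedding.trans e) := by
          exact sum_congr rfl fun j _ => (hswap _).symm
      _ = ∑ e, ∑ j : Fin (n + 1), F ((Equiv.swap 0 j).toEmbedding.trans e) := sum_comm
      _ = 0 := by
          rw [sum_congr rfl fun e _ => hpt e, sum_const, smul_zero]
  have hne : ((n : ℂ) + 1) ≠ 0 := by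
    intro h
    have : ((n + 1 : ℕ) : ℂ) = 0 := by push_cast; linear_combination h
    exact Nat.succ_ne_zero n (Nat.cast_injective (R := ℂ) (this.trans Nat.cast_zero.symm))
  exact (mul_eq_zero.mp htot).resolve_left hne
end

section
/- Let n ∈ ℕ, let λ₀, λ₁, …, λ_n be pairwise distinct complex numbers, and let z be a complex number different from every λ_j. Then ∑_{j=0}^{n} (z − λ_j)⁻² · ∏_{k ≠ j} (λ_j − λ_k)⁻¹ = ( ∑_{j=0}^{n} (z − λ_j)⁻¹ ) · ∏_{k=0}^{n} (z − λ_k)⁻¹. -/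
open Finset

/-- Partial fraction decomposition: `∏_k (w − λ_k)⁻¹ = ∑_j (w − λ_j)⁻¹ ∏_{k ≠ j} (λ_j − λ_k)⁻¹`. -/
theorem partial_fraction_aux
    (n : ℕ) (lam : Fin (n + 1) → ℂ) (hlam : Function.Injective lam)
    (w : ℂ) (hw : ∀ j, w ≠ lam j) :
    ∑ j : Fin (n + 1), (∏ k ∈ univ.erase j, (lam j - lam k)⁻¹) * (w - lam j)⁻¹ =
      ∏ k : Fin (n + 1), (w - lam k)⁻¹ := by
  have hsum := Lagrange.sum_basis (s := (univ : Finset (Fin (n + 1)))) (v := lam)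
    hlam.injOn ⟨0, mem_univ 0⟩
  have hev : ∑ j : Fin (n + 1),
      ∏ k ∈ univ.erase j, ((lam j - lam k)⁻¹ * (w - lam k)) = 1 := by
    have := congrArg (Polynomial.eval w) hsum
    simpa [Lagrange.basis, Lagrange.basisDivisor, Polynomial.eval_finset_sum,
      Polynomial.eval_prod] using this
  have key : ∀ j : Fin (n + 1),
      (∏ k ∈ univ.erase j, ((lam j - lam k)⁻¹ * (w - lam k))) *
        ∏ k : Fin (n + 1), (w - lam k)⁻¹ =
      (∏ k ∈ univ.erase j, (lam j - lam k)⁻¹) * (w - lam j)⁻¹ := by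
    intro j
    rw [prod_mul_distrib]
    have h1 : ∏ k : Fin (n + 1), (w - lam k)⁻¹ =
        (w - lam j)⁻¹ * ∏ k ∈ univ.erase j, (w - lam k)⁻¹ :=
      (mul_prod_erase univ _ (mem_univ j)).symm
    have h2 : (∏ k ∈ univ.erase j, (w - lam k)) *
        ∏ k ∈ univ.erase j, (w - lam k)⁻¹ = 1 := by
      rw [← prod_mul_distrib]
      exact prod_eq_one fun k _ => mul_inv_cancel₀ (sub_ne_zero_of_ne (hw k))
    rw [h1, mul_mul_mul_comm, h2, mul_one, mul_comm]
  calc ∑ j : Fin (n + 1), (∏ k ∈ univ.erase j, (lam j - lam k)⁻¹) * (w - lam j)⁻¹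
      = ∑ j : Fin (n + 1), (∏ k ∈ univ.erase j, ((lam j - lam k)⁻¹ * (w - lam k))) *
          ∏ k : Fin (n + 1), (w - lam k)⁻¹ := by
        exact (sum_congr rfl fun j _ => (key j)).symm
    _ = ∏ k : Fin (n + 1), (w - lam k)⁻¹ := by
        rw [← sum_mul, hev, one_mul]

/-- The residue-theorem identity behind Lemma 1: for pairwise distinct complex numbers
`λ₀, …, λ_n` and `z` different from every `λ_j`,
`∑_j (z − λ_j)⁻² ∏_{k ≠ j} (λ_j − λ_k)⁻¹ = (∑_j (z − λ_j)⁻¹) ∏_k (z − λ_k)⁻¹`. -/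
theorem residue_sum_identity
    (n : ℕ) (lam : Fin (n + 1) → ℂ) (hlam : Function.Injective lam)
    (z : ℂ) (hz : ∀ j, z ≠ lam j) :
    ∑ j : Fin (n + 1),
        ((z - lam j)⁻¹) ^ 2 * ∏ k ∈ univ.erase j, (lam j - lam k)⁻¹ =
      (∑ j : Fin (n + 1), (z - lam j)⁻¹) * ∏ k : Fin (n + 1), (z - lam k)⁻¹ := by
  set c : Fin (n + 1) → ℂ := fun j => ∏ k ∈ univ.erase j, (lam j - lam k)⁻¹ with hc
  -- derivative of the sum side
  have hg : HasDerivAt (fun w : ℂ => ∑ j : Fin (n + 1), c j * (w - lam j)⁻¹)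
      (∑ j : Fin (n + 1), c j * (-1 / (z - lam j) ^ 2)) z := by
    apply HasDerivAt.fun_sum
    intro j _
    have h1 : HasDerivAt (fun w : ℂ => w - lam j) 1 z := by
      simpa using (hasDerivAt_id z).sub_const (lam j)
    exact (h1.inv (sub_ne_zero_of_ne (hz j))).const_mul (c j)
  -- derivative of the product side
  have hf : HasDerivAt (fun w : ℂ => ∏ k : Fin (n + 1), (w - lam k)⁻¹)
      (∑ j : Fin (n + 1), (∏ k ∈ univ.erase j, (z - lam k)⁻¹) •
        (-1 / (z - lam j) ^ 2)) z := by
    apply HasDerivAt.fun_finsetProd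
    intro k _
    have h1 : HasDerivAt (fun w : ℂ => w - lam k) 1 z := by
      simpa using (hasDerivAt_id z).sub_const (lam k)
    exact h1.inv (sub_ne_zero_of_ne (hz k))
  -- the two functions agree near z
  have heq : (fun w : ℂ => ∑ j : Fin (n + 1), c j * (w - lam j)⁻¹)
      =ᶠ[nhds z] (fun w : ℂ => ∏ k : Fin (n + 1), (w - lam k)⁻¹) := by
    have hopen : IsOpen ((Set.range lam)ᶜ) :=
      (Set.finite_range lam).isClosed.isOpen_compl
    have hmem : (Set.range lam)ᶜ ∈ nhds z := by
      apply hopen.mem_nhds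
      simp only [Set.mem_compl_iff, Set.mem_range, not_exists]
      intro j h
      exact hz j h.symm
    filter_upwards [hmem] with w hw
    apply partial_fraction_aux n lam hlam w
    intro j h
    exact hw ⟨j, h.symm⟩
  have hg' : HasDerivAt (fun w : ℂ => ∏ k : Fin (n + 1), (w - lam k)⁻¹)
      (∑ j : Fin (n + 1), c j * (-1 / (z - lam j) ^ 2)) z :=
    hg.congr_of_eventuallyEq heq.symm
  have hder : ∑ j : Fin (n + 1), (∏ k ∈ univ.erase j, (z - lam k)⁻¹) •
        (-1 / (z - lam j) ^ 2) =
      ∑ j : Fin (n + 1), c j * (-1 / (z - lam j) ^ 2) := hf.unique hg'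
  -- rewrite both derivative expressions
  have hL : ∑ j : Fin (n + 1), c j * (-1 / (z - lam j) ^ 2) =
      -∑ j : Fin (n + 1), ((z - lam j)⁻¹) ^ 2 * c j := by
    rw [← Finset.sum_neg_distrib]
    apply sum_congr rfl
    intro j _
    field_simp
  have hR : ∑ j : Fin (n + 1), (∏ k ∈ univ.erase j, (z - lam k)⁻¹) •
        (-1 / (z - lam j) ^ 2) =
      -((∑ j : Fin (n + 1), (z - lam j)⁻¹) * ∏ k : Fin (n + 1), (z - lam k)⁻¹) := by
    rw [sum_mul, ← Finset.sum_neg_distrib]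
    apply sum_congr rfl
    intro j _
    have hprod : ∏ k : Fin (n + 1), (z - lam k)⁻¹ =
        (z - lam j)⁻¹ * ∏ k ∈ univ.erase j, (z - lam k)⁻¹ :=
      (mul_prod_erase univ _ (mem_univ j)).symm
    rw [hprod, smul_eq_mul]
    have hzj : z - lam j ≠ 0 := sub_ne_zero_of_ne (hz j)
    field_simp
  rw [hL, hR] at hder
  linear_combination hder
end

section
/- Let N ≥ 1, let λ₁, …, λ_N be pairwise distinct real numbers, let n ∈ ℕ with n + 1 ≤ N, and let z be a complex number different from every λ_j. Then (n+1) · ∑_{(e₀, …, e_n) p.d.} (z − λ_{e₀})⁻¹ · ∏_{k=1}^{n} (λ_{e₀} − λ_{e_k})⁻¹ = ∑_{(e₀, …, e_n) p.d.} ∏_{k=0}^{n} (z − λ_{e_k})⁻¹, where both sums run over all ordered (n+1)-tuples of pairwise distinct indices in {1, …, N}. -/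
open Finset

/-- Partial fraction decomposition over a finset. -/
lemma partial_fractions_s2 {ι : Type*} [DecidableEq ι] (s : Finset ι) (hs : s.Nonempty)
    (v : ι → ℂ) (hinj : Set.InjOn v s) (z : ℂ) (hz : ∀ j ∈ s, z ≠ v j) :
    ∏ j ∈ s, (z - v j)⁻¹ = ∑ j ∈ s, (z - v j)⁻¹ * ∏ i ∈ s.erase j, (v j - v i)⁻¹ := by
  have h1 : ∑ j ∈ s, ∏ i ∈ s.erase j, ((v j - v i)⁻¹ * (z - v i)) = 1 := by
    have h := congrArg (Polynomial.eval z) (Lagrange.sum_basis hinj hs)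
    simpa [Lagrange.basis, Lagrange.basisDivisor, Polynomial.eval_prod,
      Polynomial.eval_finset_sum] using h
  calc ∏ j ∈ s, (z - v j)⁻¹
      = (∏ j ∈ s, (z - v j)⁻¹) *
          ∑ j ∈ s, ∏ i ∈ s.erase j, ((v j - v i)⁻¹ * (z - v i)) := by rw [h1, mul_one]
    _ = ∑ j ∈ s, (∏ i ∈ s, (z - v i)⁻¹) *
          ∏ i ∈ s.erase j, ((v j - v i)⁻¹ * (z - v i)) := by rw [Finset.mul_sum]
    _ = ∑ j ∈ s, (z - v j)⁻¹ * ∏ i ∈ s.erase j, (v j - v i)⁻¹ := by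
        refine Finset.sum_congr rfl fun j hj => ?_
        rw [← Finset.mul_prod_erase s _ hj, mul_assoc, ← Finset.prod_mul_distrib]
        congr 1
        refine Finset.prod_congr rfl fun i hi => ?_
        have hne : z - v i ≠ 0 := sub_ne_zero.mpr (hz i (Finset.mem_of_mem_erase hi))
        field_simp

/-- The "few manipulations" identity from the `t → ∞` consistency check: for pairwise
distinct reals `λ₁, …, λ_N`, `n + 1 ≤ N`, and `z` different from every `λ_j`,
`(n+1) ∑_{p.d.} (z − λ_{e₀})⁻¹ ∏_{k=1}^n (λ_{e₀} − λ_{e_k})⁻¹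
  = ∑_{p.d.} ∏_{k=0}^n (z − λ_{e_k})⁻¹`,
both sums running over ordered `(n+1)`-tuples of pairwise distinct indices. -/
theorem tuple_sum_identity
    (N : ℕ) (hN : 1 ≤ N) (lam : Fin N → ℝ) (hlam : Function.Injective lam)
    (n : ℕ) (hn : n + 1 ≤ N) (z : ℂ) (hz : ∀ j, z ≠ (lam j : ℂ)) :
    (n + 1 : ℂ) *
        ∑ e : Fin (n + 1) ↪ Fin N,
          (z - (lam (e 0) : ℂ))⁻¹ *
            ∏ k : Fin n, ((lam (e 0) : ℂ) - (lam (e k.succ) : ℂ))⁻¹ =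
      ∑ e : Fin (n + 1) ↪ Fin N, ∏ k : Fin (n + 1), (z - (lam (e k) : ℂ))⁻¹ := by
  classical
  set H : (Fin (n + 1) ↪ Fin N) → Fin (n + 1) → ℂ := fun e m =>
    (z - (lam (e m) : ℂ))⁻¹ *
      ∏ k ∈ Finset.univ.erase m, ((lam (e m) : ℂ) - (lam (e k) : ℂ))⁻¹ with hH
  -- Step A: partial fractions for each tuple
  have stepA : ∀ e : Fin (n + 1) ↪ Fin N,
      ∏ k : Fin (n + 1), (z - (lam (e k) : ℂ))⁻¹ = ∑ m : Fin (n + 1), H e m := by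
    intro e
    refine partial_fractions_s2 Finset.univ Finset.univ_nonempty
      (fun k => (lam (e k) : ℂ)) ?_ z (fun j _ => hz (e j))
    intro a _ b _ hab
    have hab' : ((lam (e a)) : ℂ) = ((lam (e b)) : ℂ) := hab
    exact e.injective (hlam (by exact_mod_cast hab'))
  -- Step C: each inner sum equals the m = 0 one
  have stepC : ∀ m : Fin (n + 1),
      (∑ e : Fin (n + 1) ↪ Fin N, H e m) = ∑ e : Fin (n + 1) ↪ Fin N, H e 0 := by
    intro m
    set σ := Equiv.swap (0 : Fin (n + 1)) m with hσ
    have hbij : Function.Bijective (fun e : Fin (n + 1) ↪ Fin N => σ.toEmbedding.trans e) := by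
      apply Function.Involutive.bijective
      intro e; ext k; simp [σ, Equiv.swap_apply_self]
    refine (Fintype.sum_bijective _ hbij _ _ ?_).symm
    intro e
    show H e 0 = H (σ.toEmbedding.trans e) m
    have h0 : σ m = 0 := Equiv.swap_apply_right 0 m
    simp only [hH, Function.Embedding.trans_apply, Equiv.coe_toEmbedding, h0]
    congr 1
    refine Finset.prod_equiv σ.symm ?_ ?_
    · intro k
      simp only [Finset.mem_erase, Finset.mem_univ, and_true]
      constructor
      · intro hk hc
        apply hk
        have : σ (σ.symm k) = σ m := by rw [hc]
        simpa [h0] using this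
      · intro hk hc
        exact hk (by rw [hc, Equiv.symm_apply_eq, h0])
    · intro k _
      simp [σ, Equiv.swap_apply_self]
  -- Step E: H e 0 is the LHS summand
  have stepE : ∀ e : Fin (n + 1) ↪ Fin N,
      H e 0 = (z - (lam (e 0) : ℂ))⁻¹ *
        ∏ k : Fin n, ((lam (e 0) : ℂ) - (lam (e k.succ) : ℂ))⁻¹ := by
    intro e
    simp only [hH]
    congr 1
    refine (Finset.prod_bij (fun (k : Fin n) _ => k.succ) ?_ ?_ ?_ ?_).symm
    · intro k _
      simp [Fin.succ_ne_zero]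
    · intro a _ b _ hab
      exact Fin.succ_injective _ hab
    · intro b hb
      obtain ⟨k, rfl⟩ := Fin.eq_succ_of_ne_zero (Finset.mem_erase.mp hb).1
      exact ⟨k, Finset.mem_univ k, rfl⟩
    · intro k _; rfl
  calc (n + 1 : ℂ) *
        ∑ e : Fin (n + 1) ↪ Fin N,
          (z - (lam (e 0) : ℂ))⁻¹ *
            ∏ k : Fin n, ((lam (e 0) : ℂ) - (lam (e k.succ) : ℂ))⁻¹
      = (n + 1 : ℂ) * ∑ e : Fin (n + 1) ↪ Fin N, H e 0 := by
        congr 1; exact Finset.sum_congr rfl fun e _ => (stepE e).symm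
    _ = ∑ m : Fin (n + 1), ∑ e : Fin (n + 1) ↪ Fin N, H e m := by
        rw [Finset.sum_congr rfl fun m _ => stepC m]
        simp [Finset.sum_const, Finset.card_univ, nsmul_eq_mul]
    _ = ∑ e : Fin (n + 1) ↪ Fin N, ∑ m : Fin (n + 1), H e m := Finset.sum_comm
    _ = ∑ e : Fin (n + 1) ↪ Fin N, ∏ k : Fin (n + 1), (z - (lam (e k) : ℂ))⁻¹ := by
        exact Finset.sum_congr rfl fun e _ => (stepA e).symm
end

section
/- Let U ⊆ ℂ × ℝ be open, let g : ℂ × ℝ → ℂ, gA : ℂ → ℂ, and R : ℂ × ℝ → ℂ. Fix (z₀, t₀) ∈ U and suppose: (i) the subordination relation g(z, t) = gA(z − R(g(z, t), t)) holds for all (z, t) ∈ U; (ii) g has partial derivatives ∂_z g and ∂_t g at (z₀, t₀); (iii) R has partial derivatives ∂_g R (in its first argument) and ∂_t R (in its second argument) at the point (g(z₀, t₀), t₀), and is differentiable there; (iv) gA is differentiable at w₀ := z₀ − R(g(z₀, t₀), t₀). Then ∂_t g(z₀, t₀) = − ∂_t R(g(z₀, t₀), t₀) · ∂_z g(z₀,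 t₀). -/
/-- The generalized Burgers equation (Eq. (7) of the paper).  If the subordination
relation `g(z,t) = gA(z − R(g(z,t), t))` holds on an open set `U ∋ (z₀,t₀)`, `g` has
partial derivatives `gz = ∂_z g` and `gt = ∂_t g` at `(z₀,t₀)`, `R` has partial
derivatives `Rg = ∂_g R` and `Rt = ∂_t R` at `(g(z₀,t₀), t₀)` and is differentiable
there, and `gA` is differentiable at `w₀ = z₀ − R(g(z₀,t₀), t₀)`, then
`∂_t g = − ∂_t R · ∂_z g` at `(z₀,t₀)`. -/
theorem generalized_burgers
    (U : Set (ℂ × ℝ)) (hU : IsOpen U)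
    (g : ℂ × ℝ → ℂ) (gA : ℂ → ℂ) (R : ℂ × ℝ → ℂ)
    (z₀ : ℂ) (t₀ : ℝ) (hmem : (z₀, t₀) ∈ U)
    (hsub : ∀ p ∈ U, g p = gA (p.1 - R (g p, p.2)))
    (gz gt Rg Rt : ℂ)
    (hgz : HasDerivAt (fun w : ℂ => g (w, t₀)) gz z₀)
    (hgt : HasDerivAt (fun s : ℝ => g (z₀, s)) gt t₀)
    (hRg : HasDerivAt (fun w : ℂ => R (w, t₀)) Rg (g (z₀, t₀)))
    (hRt : HasDerivAt (fun s : ℝ => R (g (z₀, t₀), s)) Rt t₀)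
    (hRdiff : DifferentiableAt ℝ R (g (z₀, t₀), t₀))
    (hgA : DifferentiableAt ℂ gA (z₀ - R (g (z₀, t₀), t₀))) :
    gt = -Rt * gz := by
  set g₀ := g (z₀, t₀) with hg₀
  set c := deriv gA (z₀ - R (g₀, t₀)) with hc'
  have hc : HasDerivAt gA c (z₀ - R (g₀, t₀)) := hgA.hasDerivAt
  set F := fderiv ℝ R (g₀, t₀) with hF'
  have A : HasFDerivAt R F (g₀, t₀) := hRdiff.hasFDerivAt
  -- F (gt, 0) = gt * Rg
  have h1 : HasFDerivAt (fun w : ℂ => R (w, t₀))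
      (F.comp ((ContinuousLinearMap.id ℝ ℂ).prod 0)) g₀ :=
    A.comp g₀ ((hasFDerivAt_id g₀).prodMk (hasFDerivAt_const t₀ g₀))
  have h2 : HasFDerivAt (fun w : ℂ => R (w, t₀))
      (((1 : ℂ →L[ℂ] ℂ).smulRight Rg).restrictScalars ℝ) g₀ :=
    hRg.hasFDerivAt.restrictScalars ℝ
  have hFg : F (gt, 0) = gt * Rg := by
    have := h1.unique h2
    have := congrArg (fun (L : ℂ →L[ℝ] ℂ) => L gt) this
    simpa [smul_eq_mul] using this
  -- F (0, 1) = Rt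
  have h3 : HasDerivAt (fun s : ℝ => R (g₀, s)) (F (0, 1)) t₀ :=
    A.comp_hasDerivAt t₀ ((hasDerivAt_const t₀ g₀).prodMk (hasDerivAt_id t₀))
  have hFt : F (0, 1) = Rt := (h3.unique hRt)
  -- derivative of s ↦ R (g (z₀, s), s)
  have hcurve : HasDerivAt (fun s : ℝ => ((g (z₀, s), s) : ℂ × ℝ)) (gt, 1) t₀ :=
    hgt.prodMk (hasDerivAt_id t₀)
  have h4 : HasDerivAt (fun s : ℝ => R (g (z₀, s), s)) (F (gt, 1)) t₀ :=
    A.comp_hasDerivAt_of_eq t₀ hcurve rfl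
  have hFgt : F (gt, 1) = gt * Rg + Rt := by
    have : ((gt, 1) : ℂ × ℝ) = (gt, 0) + (0, 1) := by simp
    rw [this, map_add, hFg, hFt]
  -- t-direction equation
  have hinT : HasDerivAt (fun s : ℝ => z₀ - R (g (z₀, s), s)) (-(gt * Rg + Rt)) t₀ := by
    simpa [hFgt] using h4.const_sub z₀
  have houtT : HasDerivAt (fun s : ℝ => gA (z₀ - R (g (z₀, s), s)))
      ((-(gt * Rg + Rt)) * c) t₀ := by
    have := (hc.hasFDerivAt.restrictScalars ℝ).comp_hasDerivAt t₀ hinT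
    simpa [smul_eq_mul, Function.comp_def] using this
  have heqT : (fun s : ℝ => g (z₀, s)) =ᶠ[nhds t₀] fun s => gA (z₀ - R (g (z₀, s), s)) := by
    have hcont : Continuous fun s : ℝ => ((z₀, s) : ℂ × ℝ) :=
      continuous_const.prodMk continuous_id
    have : ∀ᶠ s in nhds t₀, ((z₀, s) : ℂ × ℝ) ∈ U :=
      hcont.continuousAt (hU.mem_nhds hmem)
    filter_upwards [this] with s hs
    exact hsub (z₀, s) hs
  have eqT : gt = (-(gt * Rg + Rt)) * c :=
    hgt.unique (houtT.congr_of_eventuallyEq heqT)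
  -- z-direction equation
  have hRz : HasDerivAt (fun w : ℂ => R (g (w, t₀), t₀)) (Rg * gz) z₀ :=
    by have := hRg.comp z₀ hgz; exact this
  have hinZ : HasDerivAt (fun w : ℂ => w - R (g (w, t₀), t₀)) (1 - Rg * gz) z₀ :=
    (hasDerivAt_id z₀).sub hRz
  have houtZ : HasDerivAt (fun w : ℂ => gA (w - R (g (w, t₀), t₀)))
      (c * (1 - Rg * gz)) z₀ := hc.comp z₀ hinZ
  have heqZ : (fun w : ℂ => g (w, t₀)) =ᶠ[nhds z₀] fun w => gA (w - R (g (w, t₀), t₀)) := by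
    have hcont : Continuous fun w : ℂ => ((w, t₀) : ℂ × ℝ) :=
      continuous_id.prodMk continuous_const
    have : ∀ᶠ w in nhds z₀, ((w, t₀) : ℂ × ℝ) ∈ U :=
      hcont.continuousAt (hU.mem_nhds hmem)
    filter_upwards [this] with w hw
    exact hsub (w, t₀) hw
  have eqZ : gz = c * (1 - Rg * gz) :=
    hgz.unique (houtZ.congr_of_eventuallyEq heqZ)
  -- algebra
  have h0 : (1 : ℂ) + c * Rg ≠ 0 := by
    intro h
    have hcz : c = 0 := by linear_combination gz * h - eqZ
    rw [hcz] at h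
    simp at h
  have key : gt * (1 + c * Rg) = (-Rt * gz) * (1 + c * Rg) := by
    linear_combination eqT + Rt * eqZ
  exact mul_right_cancel₀ h0 key
end

section
/- Let N ≥ 2, let λ₁, …, λ_N be pairwise distinct real numbers, and let i ∈ {1, …, N}. Then ∑_{k ≠ i} (λ_i − λ_k)⁻² · [ ∑_{j ≠ k} (λ_k − λ_j)⁻¹ − ∑_{j ≠ i} (λ_i − λ_j)⁻¹ ] = 2 ∑_{k ≠ i} (λ_k − λ_i)⁻³. -/
open Finset

/-- The key order-`t` identity of the SI: for pairwise distinct reals `λ₁, …, λ_N`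
and any index `i`,
`∑_{k≠i} (λ_i − λ_k)⁻² [∑_{j≠k} (λ_k − λ_j)⁻¹ − ∑_{j≠i} (λ_i − λ_j)⁻¹]
  = 2 ∑_{k≠i} (λ_k − λ_i)⁻³`. -/
theorem coulomb_order_t_identity
    (N : ℕ) (hN : 2 ≤ N) (lam : Fin N → ℝ) (hlam : Function.Injective lam)
    (i : Fin N) :
    ∑ k ∈ univ.erase i,
        ((lam i - lam k)⁻¹) ^ 2 *
          ((∑ j ∈ univ.erase k, (lam k - lam j)⁻¹) -
            ∑ j ∈ univ.erase i, (lam i - lam j)⁻¹) =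
      2 * ∑ k ∈ univ.erase i, ((lam k - lam i)⁻¹) ^ 3 := by
  have hne : ∀ {a b : Fin N}, a ≠ b → lam a - lam b ≠ 0 := fun {a b} h =>
    sub_ne_zero.mpr (fun e => h (hlam e))
  set E := (univ : Finset (Fin N)).erase i with hE
  set g : Fin N → Fin N → ℝ := fun k j =>
    ((lam i - lam k)⁻¹) ^ 2 * ((lam k - lam j)⁻¹ - (lam i - lam j)⁻¹) with hg
  have key : ∀ k ∈ E, ((lam i - lam k)⁻¹) ^ 2 *
          ((∑ j ∈ univ.erase k, (lam k - lam j)⁻¹) -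
            ∑ j ∈ univ.erase i, (lam i - lam j)⁻¹)
      = 2 * ((lam k - lam i)⁻¹) ^ 3 + ∑ j ∈ E.erase k, g k j := by
    intro k hk
    have hki : k ≠ i := (mem_erase.mp hk).1
    have hiE : i ∉ E.erase k := fun h => (mem_erase.mp (mem_erase.mp h).2).1 rfl
    have h1 : (univ : Finset (Fin N)).erase k = insert i (E.erase k) := by
      ext x
      simp only [hE, mem_erase, mem_insert, mem_univ, and_true]
      constructor
      · intro hx
        by_cases hxi : x = i
        · exact Or.inl hxi
        · exact Or.inr ⟨hx, hxi⟩
      · rintro (rfl | ⟨hxk, _⟩)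
        · exact fun h => hki h.symm
        · exact hxk
    have h2 : ∑ j ∈ univ.erase i, (lam i - lam j)⁻¹
        = (lam i - lam k)⁻¹ + ∑ j ∈ E.erase k, (lam i - lam j)⁻¹ :=
      (Finset.add_sum_erase E _ hk).symm
    rw [h1, sum_insert hiE, h2, hg]
    rw [← mul_sum, sum_sub_distrib]
    have h0 : lam i - lam k ≠ 0 := hne (fun h => hki h.symm)
    have h0' : lam k - lam i ≠ 0 := hne hki
    have hc : ((lam i - lam k)⁻¹) ^ 2 * ((lam k - lam i)⁻¹ - (lam i - lam k)⁻¹)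
        = 2 * ((lam k - lam i)⁻¹) ^ 3 := by
      field_simp
      ring
    rw [← hc]
    ring
  rw [sum_congr rfl key, sum_add_distrib, ← mul_sum]
  have hD : ∑ k ∈ E, ∑ j ∈ E.erase k, g k j = 0 := by
    set h : Fin N → Fin N → ℝ := fun k j => if j = k then 0 else g k j with hh
    have hrw : ∀ k ∈ E, ∑ j ∈ E.erase k, g k j = ∑ j ∈ E, h k j := by
      intro k hk
      rw [← Finset.add_sum_erase E (h k) hk]
      simp only [hh, if_pos rfl, zero_add]
      exact sum_congr rfl (fun j hj => (if_neg (mem_erase.mp hj).1).symm)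
    rw [sum_congr rfl hrw]
    have hanti : ∀ k ∈ E, ∀ j ∈ E, h k j = - h j k := by
      intro k hk j hj
      by_cases hjk : j = k
      · subst hjk; simp [hh]
      · rw [hh]
        simp only [if_neg hjk, if_neg (Ne.symm hjk)]
        rw [hg]
        have h1 : lam i - lam k ≠ 0 := hne (fun h => (mem_erase.mp hk).1 h.symm)
        have h2 : lam i - lam j ≠ 0 := hne (fun h => (mem_erase.mp hj).1 h.symm)
        have h3 : lam k - lam j ≠ 0 := hne (fun h => hjk h.symm)
        have h4 : lam j - lam k ≠ 0 := hne hjk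
        field_simp
        ring
    have hneg : ∑ k ∈ E, ∑ j ∈ E, h k j = - ∑ k ∈ E, ∑ j ∈ E, h k j := by
      conv_lhs => rw [sum_comm]
      rw [← sum_neg_distrib]
      refine sum_congr rfl fun j hj => ?_
      rw [← sum_neg_distrib]
      exact sum_congr rfl fun k hk => hanti k hk j hj
    linarith
  rw [hD, add_zero]
end

section
/- Let N ≥ 4, let a₁, …, a_N be pairwise distinct real numbers, let κ₂, κ₃, κ₄ ∈ ℝ, and fix i ∈ {1, …, N}. For each m ∈ {1, …, N} define c_m⁽²⁾ = (κ₂/N) ∑_{k ≠ m} (a_m − a_k)⁻¹, c_m⁽³⁾ = (κ₃/N²) ∑_{k₁, k₂ ≠ m, k₁ ≠ k₂} (a_m − a_{k₁})⁻¹ (a_m − a_{k₂})⁻¹, and c_m⁽⁴⁾ = (κ₄/N³) ∑_{k₁, k₂, k₃ ≠ m, pairwise distinct} ∏_{j=1}^{3} (a_m − a_{k_j})⁻¹ − (κ₂²/N²) ∑_{k ≠ m} (a_m − a_k)⁻³, and set λ_m(t) = a_m + t c_m⁽²⁾ + t^{3/2} c_m⁽³⁾ + t² c_m⁽⁴⁾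 for t ≥ 0. Define F_i(t) = (κ₂/N) ∑_{k ≠ i} (λ_i(t) − λ_k(t))⁻¹ + (3 κ₃ t^{1/2}/(2N²)) ∑_{k₁, k₂ ≠ i, k₁ ≠ k₂} (λ_i(t) − λ_{k₁}(t))⁻¹ (λ_i(t) − λ_{k₂}(t))⁻¹ + (2 κ₄ t/N³) ∑_{k₁, k₂, k₃ ≠ i, pairwise distinct} ∏_{j=1}^{3} (λ_i(t) − λ_{k_j}(t))⁻¹. Then, as t → 0⁺, λ_i′(t) − F_i(t) = o(t). -/
open Finset
open Filter

/-- Expected second-order perturbation coefficient `c_m⁽²⁾ = (κ₂/N) ∑_{k≠m} (a_m − a_k)⁻¹`. -/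
noncomputable def pertCoeff2 (N : ℕ) (κ₂ : ℝ) (a : Fin N → ℝ) (m : Fin N) : ℝ :=
  (κ₂ / N) * ∑ k ∈ univ.erase m, (a m - a k)⁻¹

/-- Expected third-order perturbation coefficient
`c_m⁽³⁾ = (κ₃/N²) ∑_{k₁≠k₂, both ≠ m} (a_m − a_{k₁})⁻¹ (a_m − a_{k₂})⁻¹`. -/
noncomputable def pertCoeff3 (N : ℕ) (κ₃ : ℝ) (a : Fin N → ℝ) (m : Fin N) : ℝ :=
  (κ₃ / (N : ℝ) ^ 2) *
    ∑ k₁ ∈ univ.erase m, ∑ k₂ ∈ (univ.erase m).erase k₁,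
      (a m - a k₁)⁻¹ * (a m - a k₂)⁻¹

/-- Expected fourth-order perturbation coefficient
`c_m⁽⁴⁾ = (κ₄/N³) ∑_{k₁,k₂,k₃ p.d., ≠ m} ∏_j (a_m − a_{k_j})⁻¹
        − (κ₂²/N²) ∑_{k≠m} (a_m − a_k)⁻³`. -/
noncomputable def pertCoeff4 (N : ℕ) (κ₂ κ₄ : ℝ) (a : Fin N → ℝ) (m : Fin N) : ℝ :=
  (κ₄ / (N : ℝ) ^ 3) *
      (∑ k₁ ∈ univ.erase m, ∑ k₂ ∈ (univ.erase m).erase k₁,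
        ∑ k₃ ∈ ((univ.erase m).erase k₁).erase k₂,
          (a m - a k₁)⁻¹ * (a m - a k₂)⁻¹ * (a m - a k₃)⁻¹) -
    (κ₂ ^ 2 / (N : ℝ) ^ 2) * ∑ k ∈ univ.erase m, ((a m - a k)⁻¹) ^ 3

/-- Second-order perturbative eigenvalue trajectory
`λ_m(t) = a_m + t c_m⁽²⁾ + t^{3/2} c_m⁽³⁾ + t² c_m⁽⁴⁾`. -/
noncomputable def pertEigenvalue (N : ℕ) (κ₂ κ₃ κ₄ : ℝ) (a : Fin N → ℝ) (m : Fin N)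
    (t : ℝ) : ℝ :=
  a m + t * pertCoeff2 N κ₂ a m + t * Real.sqrt t * pertCoeff3 N κ₃ a m +
    t ^ 2 * pertCoeff4 N κ₂ κ₄ a m

/-- The velocity field of the paper's dynamical system, truncated at the four-body
force, evaluated on the perturbative trajectories. -/
noncomputable def truncatedVelocity (N : ℕ) (κ₂ κ₃ κ₄ : ℝ) (a : Fin N → ℝ) (i : Fin N)
    (t : ℝ) : ℝ :=
  (κ₂ / N) * ∑ k ∈ univ.erase i,
      (pertEigenvalue N κ₂ κ₃ κ₄ a i t - pertEigenvalue N κ₂ κ₃ κ₄ a k t)⁻¹ +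
    (3 * κ₃ * Real.sqrt t / (2 * (N : ℝ) ^ 2)) *
      (∑ k₁ ∈ univ.erase i, ∑ k₂ ∈ (univ.erase i).erase k₁,
        (pertEigenvalue N κ₂ κ₃ κ₄ a i t - pertEigenvalue N κ₂ κ₃ κ₄ a k₁ t)⁻¹ *
          (pertEigenvalue N κ₂ κ₃ κ₄ a i t - pertEigenvalue N κ₂ κ₃ κ₄ a k₂ t)⁻¹) +
    (2 * κ₄ * t / (N : ℝ) ^ 3) *
      (∑ k₁ ∈ univ.erase i, ∑ k₂ ∈ (univ.erase i).erase k₁,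
        ∑ k₃ ∈ ((univ.erase i).erase k₁).erase k₂,
          (pertEigenvalue N κ₂ κ₃ κ₄ a i t - pertEigenvalue N κ₂ κ₃ κ₄ a k₁ t)⁻¹ *
            (pertEigenvalue N κ₂ κ₃ κ₄ a i t - pertEigenvalue N κ₂ κ₃ κ₄ a k₂ t)⁻¹ *
            (pertEigenvalue N κ₂ κ₃ κ₄ a i t - pertEigenvalue N κ₂ κ₃ κ₄ a k₃ t)⁻¹)

/- ## Auxiliary machinery -/

private lemma antisymm_double_sum {α : Type*} [DecidableEq α] (e : Finset α) (T : α → α → ℝ)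
    (hT : ∀ k ∈ e, ∀ j ∈ e, k ≠ j → T k j = -T j k) :
    ∑ k ∈ e, ∑ j ∈ e.erase k, T k j = 0 := by
  have key : ∑ k ∈ e, ∑ j ∈ e.erase k, T k j
      = ∑ k ∈ e, ∑ j ∈ e, if j = k then 0 else T k j := by
    refine Finset.sum_congr rfl fun k hk => ?_
    rw [← Finset.sum_erase e (f := fun j => if j = k then 0 else T k j) (a := k) (by simp)]
    exact Finset.sum_congr rfl fun j hj => by rw [if_neg (Finset.ne_of_mem_erase hj)]
  rw [key]
  have flip : ∑ k ∈ e, ∑ j ∈ e, (if j = k then 0 else T k j)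
      = -∑ k ∈ e, ∑ j ∈ e, (if j = k then 0 else T k j) := by
    conv_lhs => rw [Finset.sum_comm]
    rw [← Finset.sum_neg_distrib]
    refine Finset.sum_congr rfl fun k hk => ?_
    rw [← Finset.sum_neg_distrib]
    refine Finset.sum_congr rfl fun j hj => ?_
    by_cases h : k = j
    · simp [h]
    · rw [if_neg h, if_neg (Ne.symm h), hT j hj k hk (Ne.symm h)]
  linarith [flip]

private lemma key_identity_s12 (N : ℕ) (a : Fin N → ℝ) (ha : Function.Injective a) (κ₂ : ℝ)
    (i : Fin N) :
    ∑ k ∈ univ.erase i, (pertCoeff2 N κ₂ a i - pertCoeff2 N κ₂ a k) / (a i - a k) ^ 2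
      = (2 * κ₂ / N) * ∑ k ∈ univ.erase i, ((a i - a k)⁻¹) ^ 3 := by
  have hne : ∀ {x y : Fin N}, x ≠ y → a x - a y ≠ 0 :=
    fun h => sub_ne_zero.mpr (ha.ne h)
  have step1 : ∀ k ∈ univ.erase i, pertCoeff2 N κ₂ a i - pertCoeff2 N κ₂ a k
      = (κ₂ / N) * (2 * (a i - a k)⁻¹
          + ∑ j ∈ (univ.erase i).erase k, ((a i - a j)⁻¹ - (a k - a j)⁻¹)) := by
    intro k hk
    have hki : k ≠ i := Finset.ne_of_mem_erase hk
    have hik : i ∈ univ.erase k := Finset.mem_erase.mpr ⟨hki.symm, Finset.mem_univ i⟩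
    unfold pertCoeff2
    rw [← Finset.add_sum_erase _ _ hk, ← Finset.add_sum_erase _ _ hik,
      Finset.erase_right_comm, Finset.sum_sub_distrib]
    rw [show a k - a i = -(a i - a k) by ring, inv_neg]
    ring
  rw [Finset.sum_congr rfl fun k hk => by rw [step1 k hk]]
  have split : ∀ k ∈ univ.erase i,
      (κ₂ / N) * (2 * (a i - a k)⁻¹
          + ∑ j ∈ (univ.erase i).erase k, ((a i - a j)⁻¹ - (a k - a j)⁻¹)) / (a i - a k) ^ 2
      = (2 * κ₂ / N) * ((a i - a k)⁻¹) ^ 3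
        + (κ₂ / N) * ∑ j ∈ (univ.erase i).erase k,
            ((a i - a j)⁻¹ - (a k - a j)⁻¹) / (a i - a k) ^ 2 := by
    intro k hk
    rw [div_eq_mul_inv, ← inv_pow, ← Finset.sum_div, div_eq_mul_inv _ ((a i - a k) ^ 2),
      ← inv_pow]
    ring
  rw [Finset.sum_congr rfl split, Finset.sum_add_distrib, ← Finset.mul_sum, ← Finset.mul_sum]
  have hzero : ∑ k ∈ univ.erase i, ∑ j ∈ (univ.erase i).erase k,
      ((a i - a j)⁻¹ - (a k - a j)⁻¹) / (a i - a k) ^ 2 = 0 := by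
    refine antisymm_double_sum _ _ fun k hk j hj hkj => ?_
    have h1 : a i - a k ≠ 0 := hne (Finset.ne_of_mem_erase hk).symm
    have h2 : a i - a j ≠ 0 := hne (Finset.ne_of_mem_erase hj).symm
    have h3 : a k - a j ≠ 0 := hne hkj
    have key : ∀ x y z : ℝ, y ≠ 0 → z ≠ 0 → x = y - z → x ≠ 0 →
        (y⁻¹ - z⁻¹) / x ^ 2 = -((x⁻¹ - (-z)⁻¹) / y ^ 2) := by
      intro x y z hy hz hxyz hx
      subst hxyz
      rw [inv_neg]
      field_simp
      ring
    rw [show a j - a k = -(a k - a j) by ring]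
    exact key _ _ _ h2 h3 (by ring) h1
  rw [hzero, mul_zero, add_zero]

private lemma pert_zero (N : ℕ) (κ₂ κ₃ κ₄ : ℝ) (a : Fin N → ℝ) (m : Fin N) :
    pertEigenvalue N κ₂ κ₃ κ₄ a m 0 = a m := by
  simp [pertEigenvalue]

private lemma pert_hasDerivWithinAt_zero (N : ℕ) (κ₂ κ₃ κ₄ : ℝ) (a : Fin N → ℝ) (m : Fin N) :
    HasDerivWithinAt (pertEigenvalue N κ₂ κ₃ κ₄ a m) (pertCoeff2 N κ₂ a m) (Set.Ioi 0) 0 := by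
  have hsq0 : Tendsto Real.sqrt (nhdsWithin 0 (Set.Ioi 0)) (nhds 0) := by
    have := Real.continuous_sqrt.tendsto 0
    simpa using this.mono_left nhdsWithin_le_nhds
  have hsq : HasDerivWithinAt (fun u : ℝ => u * Real.sqrt u) 0 (Set.Ioi 0) 0 := by
    rw [hasDerivWithinAt_iff_tendsto_slope' (by simp : (0:ℝ) ∉ Set.Ioi 0)]
    refine hsq0.congr' ?_
    filter_upwards [self_mem_nhdsWithin] with t ht
    rw [slope_def_field]
    simp only [Real.sqrt_zero, mul_zero, sub_zero]
    rw [mul_comm t (Real.sqrt t), mul_div_assoc, div_self (ne_of_gt ht), mul_one]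
  have H := ((((hasDerivWithinAt_id (0:ℝ) (Set.Ioi 0)).mul_const
      (pertCoeff2 N κ₂ a m)).const_add (a m)).fun_add
      (hsq.mul_const (pertCoeff3 N κ₃ a m))).fun_add
      ((hasDerivWithinAt_pow 2 (0:ℝ) (s := Set.Ioi 0)).mul_const (pertCoeff4 N κ₂ κ₄ a m))
  have e : pertEigenvalue N κ₂ κ₃ κ₄ a m = fun t => a m + t * pertCoeff2 N κ₂ a m +
      t * Real.sqrt t * pertCoeff3 N κ₃ a m + t ^ 2 * pertCoeff4 N κ₂ κ₄ a m := rfl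
  rw [e]
  simpa using H

private lemma pert_deriv_pos (N : ℕ) (κ₂ κ₃ κ₄ : ℝ) (a : Fin N → ℝ) (m : Fin N)
    {t : ℝ} (ht : 0 < t) :
    deriv (pertEigenvalue N κ₂ κ₃ κ₄ a m) t
      = pertCoeff2 N κ₂ a m + 3 / 2 * Real.sqrt t * pertCoeff3 N κ₃ a m
        + 2 * t * pertCoeff4 N κ₂ κ₄ a m := by
  have hst : Real.sqrt t ≠ 0 := by positivity
  have hsq : HasDerivAt (fun u : ℝ => u * Real.sqrt u)
      (1 * Real.sqrt t + t * (1 / (2 * Real.sqrt t))) t :=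
    (hasDerivAt_id t).mul (Real.hasDerivAt_sqrt ht.ne')
  have H := ((((hasDerivAt_id t).mul_const (pertCoeff2 N κ₂ a m)).const_add (a m)).add
      (hsq.mul_const (pertCoeff3 N κ₃ a m))).add
      ((hasDerivAt_pow 2 t).mul_const (pertCoeff4 N κ₂ κ₄ a m))
  have H' : HasDerivAt (pertEigenvalue N κ₂ κ₃ κ₄ a m)
      (1 * pertCoeff2 N κ₂ a m + (1 * Real.sqrt t + t * (1 / (2 * Real.sqrt t))) *
        pertCoeff3 N κ₃ a m + (2:ℕ) * t ^ (2 - 1) * pertCoeff4 N κ₂ κ₄ a m) t := H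
  rw [H'.deriv]
  have h2 : t * (1 / (2 * Real.sqrt t)) = Real.sqrt t / 2 := by
    rw [mul_one_div, div_eq_div_iff (by positivity) (two_ne_zero)]
    nlinarith [Real.mul_self_sqrt ht.le]
  rw [h2]
  push_cast
  ring

noncomputable def Psum (N : ℕ) (κ₂ κ₃ κ₄ : ℝ) (a : Fin N → ℝ) (i : Fin N) (t : ℝ) : ℝ :=
  ∑ k ∈ univ.erase i,
    (pertEigenvalue N κ₂ κ₃ κ₄ a i t - pertEigenvalue N κ₂ κ₃ κ₄ a k t)⁻¹

noncomputable def Qsum (N : ℕ) (κ₂ κ₃ κ₄ : ℝ) (a : Fin N → ℝ) (i : Fin N) (t : ℝ) : ℝ :=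
  ∑ k₁ ∈ univ.erase i, ∑ k₂ ∈ (univ.erase i).erase k₁,
    (pertEigenvalue N κ₂ κ₃ κ₄ a i t - pertEigenvalue N κ₂ κ₃ κ₄ a k₁ t)⁻¹ *
      (pertEigenvalue N κ₂ κ₃ κ₄ a i t - pertEigenvalue N κ₂ κ₃ κ₄ a k₂ t)⁻¹

noncomputable def Rsum (N : ℕ) (κ₂ κ₃ κ₄ : ℝ) (a : Fin N → ℝ) (i : Fin N) (t : ℝ) : ℝ :=
  ∑ k₁ ∈ univ.erase i, ∑ k₂ ∈ (univ.erase i).erase k₁,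
    ∑ k₃ ∈ ((univ.erase i).erase k₁).erase k₂,
      (pertEigenvalue N κ₂ κ₃ κ₄ a i t - pertEigenvalue N κ₂ κ₃ κ₄ a k₁ t)⁻¹ *
        (pertEigenvalue N κ₂ κ₃ κ₄ a i t - pertEigenvalue N κ₂ κ₃ κ₄ a k₂ t)⁻¹ *
        (pertEigenvalue N κ₂ κ₃ κ₄ a i t - pertEigenvalue N κ₂ κ₃ κ₄ a k₃ t)⁻¹


/-- The SI verification: the second-order perturbative eigenvalue trajectories solve
the truncated dynamical system `dλ_i/dt = F_i(t)` up to `o(t)` as `t → 0⁺`. -/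
theorem perturbation_solves_dynamics
    (N : ℕ) (hN : 4 ≤ N) (a : Fin N → ℝ) (ha : Function.Injective a)
    (κ₂ κ₃ κ₄ : ℝ) (i : Fin N) :
    (fun t : ℝ =>
        deriv (pertEigenvalue N κ₂ κ₃ κ₄ a i) t - truncatedVelocity N κ₂ κ₃ κ₄ a i t)
      =o[nhdsWithin 0 (Set.Ioi 0)] fun t : ℝ => t := by
  have hN0 : (N : ℝ) ≠ 0 := Nat.cast_ne_zero.mpr (by omega)
  have hO : (0:ℝ) ∉ Set.Ioi (0:ℝ) := by simp
  -- derivatives of the inverses at 0⁺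
  have hg : ∀ k ∈ univ.erase i,
      HasDerivWithinAt
        (fun t => (pertEigenvalue N κ₂ κ₃ κ₄ a i t - pertEigenvalue N κ₂ κ₃ κ₄ a k t)⁻¹)
        (-(pertCoeff2 N κ₂ a i - pertCoeff2 N κ₂ a k) / (a i - a k) ^ 2) (Set.Ioi 0) 0 := by
    intro k hk
    have hik : a i - a k ≠ 0 :=
      sub_ne_zero.mpr (ha.ne (Finset.ne_of_mem_erase hk).symm)
    have hsub := (pert_hasDerivWithinAt_zero N κ₂ κ₃ κ₄ a i).fun_sub
      (pert_hasDerivWithinAt_zero N κ₂ κ₃ κ₄ a k)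
    have h0 : pertEigenvalue N κ₂ κ₃ κ₄ a i 0 - pertEigenvalue N κ₂ κ₃ κ₄ a k 0 ≠ 0 := by
      rw [pert_zero, pert_zero]; exact hik
    have := hsub.fun_inv h0
    simpa only [pert_zero] using this
  have hP : HasDerivWithinAt (Psum N κ₂ κ₃ κ₄ a i)
      (∑ k ∈ univ.erase i, -(pertCoeff2 N κ₂ a i - pertCoeff2 N κ₂ a k) / (a i - a k) ^ 2)
      (Set.Ioi 0) 0 := HasDerivWithinAt.fun_sum fun k hk => hg k hk
  obtain ⟨q, hQ⟩ : ∃ q, HasDerivWithinAt (Qsum N κ₂ κ₃ κ₄ a i) q (Set.Ioi 0) 0 :=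
    ⟨_, HasDerivWithinAt.fun_sum fun k₁ hk₁ => HasDerivWithinAt.fun_sum fun k₂ hk₂ =>
      (hg k₁ hk₁).fun_mul (hg k₂ (Finset.mem_of_mem_erase hk₂))⟩
  obtain ⟨r, hR⟩ : ∃ r, HasDerivWithinAt (Rsum N κ₂ κ₃ κ₄ a i) r (Set.Ioi 0) 0 :=
    ⟨_, HasDerivWithinAt.fun_sum fun k₁ hk₁ => HasDerivWithinAt.fun_sum fun k₂ hk₂ =>
      HasDerivWithinAt.fun_sum fun k₃ hk₃ =>
      ((hg k₁ hk₁).fun_mul (hg k₂ (Finset.mem_of_mem_erase hk₂))).fun_mul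
        (hg k₃ (Finset.mem_of_mem_erase (Finset.mem_of_mem_erase hk₃)))⟩
  -- limits
  have slope_of : ∀ (f : ℝ → ℝ) (d : ℝ), HasDerivWithinAt f d (Set.Ioi 0) 0 →
      Tendsto (fun t => (f t - f 0) / t) (nhdsWithin 0 (Set.Ioi 0)) (nhds d) := by
    intro f d hf
    have := (hasDerivWithinAt_iff_tendsto_slope' hO).mp hf
    refine this.congr fun t => ?_
    rw [slope_def_field, sub_zero]
  have hPlim := slope_of _ _ hP
  have hQlim := slope_of _ _ hQ
  have hRcont : Tendsto (Rsum N κ₂ κ₃ κ₄ a i) (nhdsWithin 0 (Set.Ioi 0))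
      (nhds (Rsum N κ₂ κ₃ κ₄ a i 0)) := hR.continuousWithinAt
  have hsqlim : Tendsto Real.sqrt (nhdsWithin 0 (Set.Ioi 0)) (nhds 0) := by
    have := Real.continuous_sqrt.tendsto 0
    simpa using this.mono_left nhdsWithin_le_nhds
  set S3 : ℝ := ∑ k ∈ univ.erase i, ((a i - a k)⁻¹) ^ 3 with hS3
  -- the comparison function and its limit
  have hG : Tendsto (fun t =>
      -(κ₂ / N) * ((Psum N κ₂ κ₃ κ₄ a i t - Psum N κ₂ κ₃ κ₄ a i 0) / t)
        - (3 * κ₃ / (2 * (N:ℝ) ^ 2)) *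
            (Real.sqrt t * ((Qsum N κ₂ κ₃ κ₄ a i t - Qsum N κ₂ κ₃ κ₄ a i 0) / t))
        + ((2 * (κ₄ / (N:ℝ) ^ 3)) *
            (Rsum N κ₂ κ₃ κ₄ a i 0 - Rsum N κ₂ κ₃ κ₄ a i t)
          - 2 * (κ₂ ^ 2 / (N:ℝ) ^ 2) * S3))
      (nhdsWithin 0 (Set.Ioi 0)) (nhds 0) := by
    have T : Tendsto (fun t =>
        -(κ₂ / N) * ((Psum N κ₂ κ₃ κ₄ a i t - Psum N κ₂ κ₃ κ₄ a i 0) / t)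
          - (3 * κ₃ / (2 * (N:ℝ) ^ 2)) *
              (Real.sqrt t * ((Qsum N κ₂ κ₃ κ₄ a i t - Qsum N κ₂ κ₃ κ₄ a i 0) / t))
          + ((2 * (κ₄ / (N:ℝ) ^ 3)) *
              (Rsum N κ₂ κ₃ κ₄ a i 0 - Rsum N κ₂ κ₃ κ₄ a i t)
            - 2 * (κ₂ ^ 2 / (N:ℝ) ^ 2) * S3))
        (nhdsWithin 0 (Set.Ioi 0))
        (nhds (-(κ₂ / (N:ℝ)) *
          (∑ k ∈ univ.erase i, -(pertCoeff2 N κ₂ a i - pertCoeff2 N κ₂ a k) / (a i - a k) ^ 2)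
          - 3 * κ₃ / (2 * (N:ℝ) ^ 2) * (0 * q)
          + ((2 * (κ₄ / (N:ℝ) ^ 3)) *
              (Rsum N κ₂ κ₃ κ₄ a i 0 - Rsum N κ₂ κ₃ κ₄ a i 0)
            - 2 * (κ₂ ^ 2 / (N:ℝ) ^ 2) * S3))) :=
      ((hPlim.const_mul _).sub ((hsqlim.mul hQlim).const_mul _)).add
        (((tendsto_const_nhds.sub hRcont).const_mul _).sub tendsto_const_nhds)
    have hval : -(κ₂ / (N:ℝ)) *
          (∑ k ∈ univ.erase i, -(pertCoeff2 N κ₂ a i - pertCoeff2 N κ₂ a k) / (a i - a k) ^ 2)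
        - 3 * κ₃ / (2 * (N:ℝ) ^ 2) * (0 * q)
        + ((2 * (κ₄ / (N:ℝ) ^ 3)) *
            (Rsum N κ₂ κ₃ κ₄ a i 0 - Rsum N κ₂ κ₃ κ₄ a i 0)
          - 2 * (κ₂ ^ 2 / (N:ℝ) ^ 2) * S3) = 0 := by
      simp only [neg_div, Finset.sum_neg_distrib]
      rw [key_identity_s12 N a ha κ₂ i, hS3]
      field_simp
      ring
    rw [hval] at T
    exact T
  -- identify the quotient with the comparison function
  rw [Asymptotics.isLittleO_iff_tendsto']
  · refine hG.congr' ?_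
    filter_upwards [self_mem_nhdsWithin] with t ht
    have htne : t ≠ 0 := ne_of_gt ht
    have hderiv := pert_deriv_pos N κ₂ κ₃ κ₄ a i ht
    have hF : truncatedVelocity N κ₂ κ₃ κ₄ a i t
        = (κ₂ / N) * Psum N κ₂ κ₃ κ₄ a i t
          + (3 * κ₃ * Real.sqrt t / (2 * (N : ℝ) ^ 2)) * Qsum N κ₂ κ₃ κ₄ a i t
          + (2 * κ₄ * t / (N : ℝ) ^ 3) * Rsum N κ₂ κ₃ κ₄ a i t := rfl
    have hP0 : Psum N κ₂ κ₃ κ₄ a i 0 = ∑ k ∈ univ.erase i, (a i - a k)⁻¹ := by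
      unfold Psum; simp only [pert_zero]
    have hQ0 : Qsum N κ₂ κ₃ κ₄ a i 0
        = ∑ k₁ ∈ univ.erase i, ∑ k₂ ∈ (univ.erase i).erase k₁,
            (a i - a k₁)⁻¹ * (a i - a k₂)⁻¹ := by
      unfold Qsum; simp only [pert_zero]
    have hR0 : Rsum N κ₂ κ₃ κ₄ a i 0
        = ∑ k₁ ∈ univ.erase i, ∑ k₂ ∈ (univ.erase i).erase k₁,
            ∑ k₃ ∈ ((univ.erase i).erase k₁).erase k₂,
              (a i - a k₁)⁻¹ * (a i - a k₂)⁻¹ * (a i - a k₃)⁻¹ := by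
      unfold Rsum; simp only [pert_zero]
    have hc2 : pertCoeff2 N κ₂ a i = κ₂ / N * Psum N κ₂ κ₃ κ₄ a i 0 := by
      rw [hP0]; rfl
    have hc3 : pertCoeff3 N κ₃ a i = κ₃ / (N:ℝ) ^ 2 * Qsum N κ₂ κ₃ κ₄ a i 0 := by
      rw [hQ0]; rfl
    have hc4 : pertCoeff4 N κ₂ κ₄ a i
        = κ₄ / (N:ℝ) ^ 3 * Rsum N κ₂ κ₃ κ₄ a i 0 - κ₂ ^ 2 / (N:ℝ) ^ 2 * S3 := by
      rw [hR0, hS3]; rfl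
    rw [hderiv, hF, hc2, hc3, hc4]
    field_simp
    ring
  · filter_upwards [self_mem_nhdsWithin] with t ht h
    exact absurd h (ne_of_gt ht)
end
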